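/- Let f : (0,∞) → (0,∞) be operator log-convex, H a complex Hilbert space, A, B, C ∈ B(H) strictly positive, and x ∈ H a unit vector. Then, writing the scalar perspective as g(a,b) = b·f(a/b) for a, b > 0 and the operator perspective as g(A,B) = B^{1/2} f(B^{-1/2}AB^{-1/2}) B^{1/2}, one has g(⟨((A+C)/2)x, x⟩, ⟨Bx, x⟩) ≤ √(⟨g(A,B)x, x⟩ · ⟨g(C,B)x, x⟩), where all inner products are (positive) real numbers. -/

import Mathlib

noncomputable section

open MeasureTheory

universe u

section Defs

variable {H : Type*} [NormedAddCommGroup H] [InnerProductSpace ℂ H] [CompleteSpace H]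

/-- An operator on a complex Hilbert space is *strictly positive* if it is positive
(in the Loewner order, hence self-adjoint) and invertible. -/
def StrictlyPos (A : H →L[ℂ] H) : Prop := 0 ≤ A ∧ IsUnit A

/-- Real powers of an operator, defined via the continuous functional calculus applied to
`t ↦ t ^ r`. -/
def opPow (A : H →L[ℂ] H) (r : ℝ) : H →L[ℂ] H := cfc (fun x : ℝ => x ^ r) A

/-- The arithmetic mean `A∇B = (A + B)/2`. -/
def arithMean (A B : H →L[ℂ] H) : H →L[ℂ] H := (2 : ℝ)⁻¹ • (A + B)

/-- The geometric mean `A♯B = B^{1/2} (B^{-1/2} A B^{-1/2})^{1/2} B^{1/2}`. -/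
def geomMean (A B : H →L[ℂ] H) : H →L[ℂ] H :=
  opPow B (1/2) * opPow (opPow B (-(1/2)) * A * opPow B (-(1/2))) (1/2) * opPow B (1/2)

/-- The harmonic mean `A!B = ((A⁻¹ + B⁻¹)/2)⁻¹`. -/
def harmMean (A B : H →L[ℂ] H) : H →L[ℂ] H :=
  Ring.inverse ((2 : ℝ)⁻¹ • (Ring.inverse A + Ring.inverse B))

/-- The perspective `g(A, B) = B^{1/2} f(B^{-1/2} A B^{-1/2}) B^{1/2}` of a function
`f : (0,∞) → (0,∞)`, where `f` acts through the continuous functional calculus. -/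
def persp (f : ℝ → ℝ) (A B : H →L[ℂ] H) : H →L[ℂ] H :=
  opPow B (1/2) * cfc f (opPow B (-(1/2)) * A * opPow B (-(1/2))) * opPow B (1/2)

/-- The (real) inner product `⟨Ax, x⟩`, which is a real number for self-adjoint `A`. -/
def rIP (A : H →L[ℂ] H) (x : H) : ℝ := (inner ℂ (A x) x : ℂ).re

end Defs

/-- A function `f : (0,∞) → (0,∞)` is *operator log-convex* if `f(A∇B) ≤ f(A)♯f(B)` for every
complex Hilbert space `H` and all strictly positive `A, B ∈ B(H)`, where `f` acts via the
continuous functional calculus. -/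
def OperatorLogConvex (f : ℝ → ℝ) : Prop :=
  ∀ (H : Type u) [NormedAddCommGroup H] [InnerProductSpace ℂ H] [CompleteSpace H]
    (A B : H →L[ℂ] H), StrictlyPos A → StrictlyPos B →
      cfc f (arithMean A B) ≤ geomMean (cfc f A) (cfc f B)

/-- The non-commutative `f`-divergence functional
`Θ(Ã, B̃) = ∫_T B_t^{1/2} f(B_t^{-1/2} A_t B_t^{-1/2}) B_t^{1/2} dμ(t)` (a Bochner integral). -/
def Theta (f : ℝ → ℝ) {T : Type*} [MeasurableSpace T] (μ : Measure T)
    {H : Type*} [NormedAddCommGroup H] [InnerProductSpace ℂ H] [CompleteSpace H]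
    (A B : T → H →L[ℂ] H) : H →L[ℂ] H :=
  ∫ t, persp f (A t) (B t) ∂μ


/-! ### Auxiliary lemmas -/

section ScalarConvexity

lemma aux_pos_comb {p q t : ℝ} (hp : 0 < p) (hq : 0 < q) (ht0 : 0 ≤ t) (ht1 : t ≤ 1) :
    0 < t * p + (1 - t) * q := by
  rcases lt_or_ge t 1 with h | h
  · have h1 : 0 < (1 - t) * q := mul_pos (by linarith) hq
    nlinarith [mul_nonneg ht0 hp.le]
  · have : t = 1 := le_antisymm ht1 h
    subst this; simpa using hp

lemma convexOn_of_midpoint {f : ℝ → ℝ} (hc : ContinuousOn f (Set.Ioi 0))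
    (hm : ∀ a ∈ Set.Ioi (0:ℝ), ∀ b ∈ Set.Ioi (0:ℝ), f ((a + b) / 2) ≤ (f a + f b) / 2) :
    ConvexOn ℝ (Set.Ioi 0) f := by
  have key : ∀ p ∈ Set.Ioi (0:ℝ), ∀ q ∈ Set.Ioi (0:ℝ), ∀ t ∈ Set.Icc (0:ℝ) 1,
      f (t * p + (1 - t) * q) ≤ t * f p + (1 - t) * f q := by
    intro p hp q hq
    set S : Set ℝ := {t | t ∈ Set.Icc (0:ℝ) 1 ∧
      f (t * p + (1 - t) * q) ≤ t * f p + (1 - t) * f q} with hS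
    have hmemIoi : ∀ t ∈ Set.Icc (0:ℝ) 1, t * p + (1 - t) * q ∈ Set.Ioi (0:ℝ) :=
      fun t ht => aux_pos_comb hp hq ht.1 ht.2
    have hclosed : IsClosed S := by
      have hphi : ContinuousOn (fun t => f (t * p + (1 - t) * q) - (t * f p + (1 - t) * f q))
          (Set.Icc (0:ℝ) 1) := by
        apply ContinuousOn.sub
        · exact hc.comp (by fun_prop) hmemIoi
        · fun_prop
      have hSeq : S = Set.Icc (0:ℝ) 1 ∩ (fun t => f (t * p + (1 - t) * q) -
          (t * f p + (1 - t) * f q)) ⁻¹' Set.Iic 0 := by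
        ext t
        simp only [hS, Set.mem_setOf_eq, Set.mem_inter_iff, Set.mem_preimage, Set.mem_Iic,
          sub_nonpos]
      rw [hSeq]
      exact hphi.preimage_isClosed_of_isClosed isClosed_Icc isClosed_Iic
    have hmid : ∀ t₁ ∈ S, ∀ t₂ ∈ S, (t₁ + t₂) / 2 ∈ S := by
      intro t₁ h₁ t₂ h₂
      obtain ⟨ht₁, hf₁⟩ := h₁
      obtain ⟨ht₂, hf₂⟩ := h₂
      refine ⟨⟨by linarith [ht₁.1, ht₂.1], by linarith [ht₁.2, ht₂.2]⟩, ?_⟩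
      have hu := hmemIoi t₁ ht₁
      have hv := hmemIoi t₂ ht₂
      have hmm := hm _ hu _ hv
      calc f ((t₁ + t₂) / 2 * p + (1 - (t₁ + t₂) / 2) * q)
          = f (((t₁ * p + (1 - t₁) * q) + (t₂ * p + (1 - t₂) * q)) / 2) := by ring_nf
        _ ≤ (f (t₁ * p + (1 - t₁) * q) + f (t₂ * p + (1 - t₂) * q)) / 2 := hmm
        _ ≤ ((t₁ * f p + (1 - t₁) * f q) + (t₂ * f p + (1 - t₂) * f q)) / 2 := by linarith
        _ = (t₁ + t₂) / 2 * f p + (1 - (t₁ + t₂) / 2) * f q := by ring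
    have hdyadic : ∀ n : ℕ, ∀ k : ℕ, k ≤ 2 ^ n → ((k : ℝ) / 2 ^ n) ∈ S := by
      intro n
      induction n with
      | zero =>
        intro k hk
        interval_cases k
        · refine ⟨⟨by norm_num, by norm_num⟩, by push_cast; norm_num⟩
        · refine ⟨⟨by norm_num, by norm_num⟩, by push_cast; norm_num⟩
      | succ n ih =>
        intro k hk
        have h₁ : (k + 1) / 2 ≤ 2 ^ n := by omega
        have h₂ : k / 2 ≤ 2 ^ n := by omega
        have hin := hmid _ (ih ((k + 1) / 2) h₁) _ (ih (k / 2) h₂)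
        have hks : ((k + 1) / 2 : ℕ) + (k / 2 : ℕ) = k := by omega
        have hksR : ((((k + 1) / 2 : ℕ) : ℝ) + ((k / 2 : ℕ) : ℝ)) = (k : ℝ) := by
          exact_mod_cast hks
        have h2n : (0:ℝ) < 2 ^ n := by positivity
        have heq : ((((k + 1) / 2 : ℕ) : ℝ) / 2 ^ n + ((k / 2 : ℕ) : ℝ) / 2 ^ n) / 2
            = (k : ℝ) / 2 ^ (n + 1) := by
          rw [pow_succ]
          field_simp
          linarith
        rwa [heq] at hin
    intro t ht
    have hmemS : t ∈ S := by
      have h1 : ∀ n : ℕ, t - (2 ^ n : ℝ)⁻¹ ≤ (⌊t * 2 ^ n⌋₊ : ℝ) / 2 ^ n := by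
        intro n
        have h2n : (0:ℝ) < 2 ^ n := by positivity
        have hinv : ((2:ℝ) ^ n)⁻¹ * 2 ^ n = 1 := inv_mul_cancel₀ h2n.ne'
        rw [le_div_iff₀ h2n]
        have hfl : t * 2 ^ n < (⌊t * 2 ^ n⌋₊ : ℝ) + 1 := Nat.lt_floor_add_one (t * 2 ^ n)
        nlinarith
      have h2 : ∀ n : ℕ, (⌊t * 2 ^ n⌋₊ : ℝ) / 2 ^ n ≤ t := by
        intro n
        have h2n : (0:ℝ) < 2 ^ n := by positivity
        rw [div_le_iff₀ h2n]
        exact Nat.floor_le (mul_nonneg ht.1 h2n.le)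
      have htends : Filter.Tendsto (fun n : ℕ => t - (2 ^ n : ℝ)⁻¹) Filter.atTop (nhds t) := by
        have hh : Filter.Tendsto (fun n : ℕ => ((2:ℝ) ^ n)⁻¹) Filter.atTop (nhds 0) := by
          simpa [inv_pow] using tendsto_pow_atTop_nhds_zero_of_lt_one
            (by norm_num : (0:ℝ) ≤ 2⁻¹) (by norm_num : (2:ℝ)⁻¹ < 1)
        simpa using Filter.Tendsto.const_sub t hh
      have htend : Filter.Tendsto (fun n : ℕ => (⌊t * 2 ^ n⌋₊ : ℝ) / 2 ^ n)
          Filter.atTop (nhds t) :=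
        tendsto_of_tendsto_of_tendsto_of_le_of_le htends tendsto_const_nhds h1 h2
      refine hclosed.mem_of_tendsto htend (Filter.Eventually.of_forall fun n => ?_)
      apply hdyadic n
      have h2n : (0:ℝ) < 2 ^ n := by positivity
      have hle : t * 2 ^ n ≤ 2 ^ n := by nlinarith [ht.2]
      calc ⌊t * 2 ^ n⌋₊ ≤ ⌊((2 ^ n : ℕ) : ℝ)⌋₊ := Nat.floor_le_floor (by push_cast; exact hle)
        _ = 2 ^ n := Nat.floor_natCast _
    exact hmemS.2
  refine ⟨convex_Ioi 0, fun p hp q hq α β hα hβ hαβ => ?_⟩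
  have hβ' : β = 1 - α := by linarith
  subst hβ'
  have hkey := key p hp q hq α ⟨hα, by linarith⟩
  simpa [smul_eq_mul] using hkey

lemma exists_support_line {f : ℝ → ℝ} (hf : ConvexOn ℝ (Set.Ioi 0) f) {t₀ : ℝ} (ht₀ : 0 < t₀) :
    ∃ k : ℝ, ∀ s ∈ Set.Ioi (0:ℝ), f t₀ + k * (s - t₀) ≤ f s := by
  have hmono := hf.slope_mono (Set.mem_Ioi.mpr ht₀)
  have hmem : ∀ s, 0 < s → s ≠ t₀ → s ∈ Set.Ioi (0:ℝ) \ {t₀} := by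
    intro s hs hne; exact ⟨hs, by simpa using hne⟩
  set K : Set ℝ := slope f t₀ '' Set.Ioi t₀ with hK
  have hne : K.Nonempty := ⟨_, ⟨t₀ + 1, Set.mem_Ioi.mpr (by linarith), rfl⟩⟩
  have hlb : ∀ s, 0 < s → s < t₀ → slope f t₀ s ∈ lowerBounds K := by
    rintro s hs hst _ ⟨u, hu, rfl⟩
    exact hmono (hmem s hs hst.ne) (hmem u (ht₀.trans hu) (ne_of_gt hu))
      (hst.le.trans (le_of_lt hu))
  have hbdd : BddBelow K := ⟨slope f t₀ (t₀ / 2), hlb _ (by linarith) (by linarith)⟩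
  refine ⟨sInf K, fun s hs => ?_⟩
  rcases lt_trichotomy s t₀ with h | h | h
  · have hsl : slope f t₀ s ≤ sInf K := le_csInf hne (hlb s hs h)
    rw [slope_def_field] at hsl
    have hneg : s - t₀ < 0 := by linarith
    rw [div_le_iff_of_neg hneg] at hsl
    linarith
  · simp [h]
  · have hsl : sInf K ≤ slope f t₀ s := csInf_le hbdd ⟨s, h, rfl⟩
    rw [slope_def_field] at hsl
    have hpos : 0 < s - t₀ := by linarith
    have := (le_div_iff₀ hpos).mp hsl
    linarith

end ScalarConvexity

section OperatorLemmas

variable {H : Type*} [NormedAddCommGroup H] [InnerProductSpace ℂ H] [CompleteSpace H]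

lemma spec_pos {T : H →L[ℂ] H} (hT : StrictlyPos T) : ∀ s ∈ spectrum ℝ T, 0 < s := by
  intro s hs
  have h0 : 0 ≤ s := spectrum_nonneg_of_nonneg hT.1 hs
  rcases h0.lt_or_eq with h | h
  · exact h
  · subst h; exact absurd hT.2 (spectrum.not_isUnit_of_zero_mem _ hs)

lemma sp_isSelfAdjoint {T : H →L[ℂ] H} (hT : StrictlyPos T) : IsSelfAdjoint T :=
  ((ContinuousLinearMap.nonneg_iff_isPositive T).mp hT.1).isSelfAdjoint

lemma rIP_mono {P Q : H →L[ℂ] H} (h : P ≤ Q) (x : H) : rIP P x ≤ rIP Q x := by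
  have hpos := (ContinuousLinearMap.le_def P Q).mp h
  have hn := hpos.inner_nonneg_left x
  have heq : (inner ℂ ((Q - P) x) x : ℂ).re = rIP Q x - rIP P x := by
    simp [rIP, ContinuousLinearMap.sub_apply, inner_sub_left]
  have h0 : (0:ℝ) ≤ rIP Q x - rIP P x := by
    rw [← heq]; exact (RCLike.nonneg_iff.mp hn).1
  linarith

lemma rIP_add (P Q : H →L[ℂ] H) (x : H) : rIP (P + Q) x = rIP P x + rIP Q x := by
  simp [rIP, ContinuousLinearMap.add_apply, inner_add_left]

lemma rIP_smul (r : ℝ) (P : H →L[ℂ] H) (x : H) : rIP (r • P) x = r * rIP P x := by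
  have h : ((r • P) x : H) = (r : ℂ) • P x := by
    simp [ContinuousLinearMap.smul_apply, Complex.coe_smul]
  rw [rIP, h, inner_smul_left]
  simp [rIP]

lemma rIP_algebraMap (r : ℝ) (x : H) :
    rIP (algebraMap ℝ (H →L[ℂ] H) r) x = r * ‖x‖ ^ 2 := by
  rw [Algebra.algebraMap_eq_smul_one, rIP_smul]
  have h : rIP (1 : H →L[ℂ] H) x = ‖x‖ ^ 2 := by
    simpa [rIP] using @inner_self_eq_norm_sq ℂ H _ _ _ x
  rw [h]

lemma shift_sa {P : H →L[ℂ] H} (hP : IsSelfAdjoint P) (u v : H) :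
    (inner ℂ (P u) v : ℂ) = inner ℂ u (P v) :=
  (ContinuousLinearMap.isSelfAdjoint_iff_isSymmetric.mp hP) u v

lemma isUnit_apply_ne_zero {S : H →L[ℂ] H} (hS : IsUnit S) {x : H} (hx : x ≠ 0) :
    S x ≠ 0 := by
  intro hcon
  apply hx
  obtain ⟨u, hu⟩ := hS
  calc x = ((↑u⁻¹ * u : H →L[ℂ] H)) x := by rw [Units.inv_mul]; simp
    _ = (↑u⁻¹ : H →L[ℂ] H) (S x) := by rw [ContinuousLinearMap.mul_apply, hu]
    _ = 0 := by rw [hcon, map_zero]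

lemma rIP_pos {T : H →L[ℂ] H} (hT : StrictlyPos T) {y : H} (hy : y ≠ 0) : 0 < rIP T y := by
  have hTsa := sp_isSelfAdjoint hT
  set R := cfc Real.sqrt T with hR
  have hRsa : IsSelfAdjoint R := cfc_predicate _ _
  have hcontsq : ContinuousOn Real.sqrt (spectrum ℝ T) := Real.continuous_sqrt.continuousOn
  have hRR : R * R = T := by
    rw [hR, ← cfc_mul _ _ T hcontsq hcontsq]
    have h : ∀ s ∈ spectrum ℝ T, Real.sqrt s * Real.sqrt s = id s :=
      fun s hs => Real.mul_self_sqrt (spec_pos hT s hs).le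
    rw [cfc_congr h, cfc_id ℝ T]
  have hRunit : IsUnit R := by
    rw [hR]
    exact (isUnit_cfc_iff Real.sqrt T hcontsq hTsa).mpr
      (fun s hs => (Real.sqrt_ne_zero'.mpr (spec_pos hT s hs)))
  have hRy : R y ≠ 0 := isUnit_apply_ne_zero hRunit hy
  have hval : rIP T y = ‖R y‖ ^ 2 := by
    rw [← hRR, rIP, ContinuousLinearMap.mul_apply, shift_sa hRsa (R y) y]
    simpa using @inner_self_eq_norm_sq ℂ H _ _ _ (R y)
  rw [hval]
  exact pow_pos (norm_pos_iff.mpr hRy) 2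

lemma jensen_cfc {f : ℝ → ℝ} (hc : ContinuousOn f (Set.Ioi 0))
    (hconv : ConvexOn ℝ (Set.Ioi 0) f) {T : H →L[ℂ] H} (hT : StrictlyPos T)
    {y : H} (hy : y ≠ 0) :
    ‖y‖ ^ 2 * f (rIP T y / ‖y‖ ^ 2) ≤ rIP (cfc f T) y := by
  have hTsa := sp_isSelfAdjoint hT
  have hspec := spec_pos hT
  have hny : (0:ℝ) < ‖y‖ ^ 2 := by
    have := norm_pos_iff.mpr hy
    positivity
  set t₀ : ℝ := rIP T y / ‖y‖ ^ 2 with ht₀def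
  have ht₀ : 0 < t₀ := div_pos (rIP_pos hT hy) hny
  obtain ⟨k, hk⟩ := exists_support_line hconv ht₀
  have hcf : ContinuousOn f (spectrum ℝ T) := hc.mono (fun s hs => hspec s hs)
  have hle : cfc (fun s : ℝ => (f t₀ - k * t₀) + k * s) T ≤ cfc f T := by
    apply cfc_mono (fun s hs => ?_) (by fun_prop) hcf
    have := hk s (hspec s hs)
    linarith
  have heq : cfc (fun s : ℝ => (f t₀ - k * t₀) + k * s) T
      = algebraMap ℝ (H →L[ℂ] H) (f t₀ - k * t₀) + k • T := by
    rw [cfc_const_add _ _ _ (by fun_prop) hTsa, cfc_const_mul_id k T hTsa]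
  rw [heq] at hle
  have hmono := rIP_mono hle y
  rw [rIP_add, rIP_algebraMap, rIP_smul] at hmono
  have hTy : rIP T y = t₀ * ‖y‖ ^ 2 := by
    rw [ht₀def]; field_simp
  rw [hTy] at hmono
  have hring : (f t₀ - k * t₀) * ‖y‖ ^ 2 + k * (t₀ * ‖y‖ ^ 2) = ‖y‖ ^ 2 * f t₀ := by ring
  linarith

lemma rpow_contOn {T : H →L[ℂ] H} (hT : StrictlyPos T) (r : ℝ) :
    ContinuousOn (fun x : ℝ => x ^ r) (spectrum ℝ T) := fun s hs =>
  (Real.continuousAt_rpow_const s r (Or.inl (spec_pos hT s hs).ne')).continuousWithinAt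

lemma opPow_isSelfAdjoint (T : H →L[ℂ] H) (r : ℝ) : IsSelfAdjoint (opPow T r) :=
  cfc_predicate _ _

lemma opPow_isUnit {T : H →L[ℂ] H} (hT : StrictlyPos T) (r : ℝ) : IsUnit (opPow T r) :=
  (isUnit_cfc_iff _ T (rpow_contOn hT r) (sp_isSelfAdjoint hT)).mpr
    (fun s hs => (Real.rpow_pos_of_pos (spec_pos hT s hs) r).ne')

lemma opPow_mul_opPow {T : H →L[ℂ] H} (hT : StrictlyPos T) (r r' : ℝ) :
    opPow T r * opPow T r' = opPow T (r + r') := by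
  rw [opPow, opPow, opPow, ← cfc_mul _ _ T (rpow_contOn hT r) (rpow_contOn hT r')]
  exact cfc_congr (fun s hs => (Real.rpow_add (spec_pos hT s hs) r r').symm)

lemma opPow_zero {T : H →L[ℂ] H} (hT : StrictlyPos T) : opPow T 0 = 1 := by
  rw [opPow]
  have h : ∀ s ∈ spectrum ℝ T, s ^ (0:ℝ) = 1 := fun s hs => Real.rpow_zero s
  rw [cfc_congr h, cfc_const_one ℝ T (sp_isSelfAdjoint hT)]

lemma opPow_one {T : H →L[ℂ] H} (hT : StrictlyPos T) : opPow T 1 = T := by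
  rw [opPow]
  have h : ∀ s ∈ spectrum ℝ T, s ^ (1:ℝ) = id s := fun s hs => Real.rpow_one s
  rw [cfc_congr h, cfc_id ℝ T (sp_isSelfAdjoint hT)]

lemma tilde_strictlyPos {A B : H →L[ℂ] H} (hA : StrictlyPos A) (hB : StrictlyPos B) :
    StrictlyPos (opPow B (-(1/2)) * A * opPow B (-(1/2))) := by
  set S := opPow B (-(1/2)) with hS
  have hSsa : IsSelfAdjoint S := opPow_isSelfAdjoint B _
  constructor
  · rw [ContinuousLinearMap.nonneg_iff_isPositive]
    have hApos := (ContinuousLinearMap.nonneg_iff_isPositive A).mp hA.1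
    have := hApos.conj_adjoint S
    rwa [← ContinuousLinearMap.star_eq_adjoint, hSsa.star_eq] at this
  · exact ((opPow_isUnit hB _).mul hA.2).mul (opPow_isUnit hB _)

lemma norm_shalf_sq {B : H →L[ℂ] H} (hB : StrictlyPos B) (x : H) :
    ‖opPow B (1/2) x‖ ^ 2 = rIP B x := by
  have hsa := opPow_isSelfAdjoint B (1/2 : ℝ)
  set S := opPow B (1/2) with hSdef
  have hBS : S * S = B := by
    rw [hSdef, opPow_mul_opPow hB]; norm_num [opPow_one hB]
  rw [rIP, ← hBS, ContinuousLinearMap.mul_apply, shift_sa hsa _ x]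
  simpa using (@inner_self_eq_norm_sq ℂ H _ _ _ (S x)).symm

lemma rIP_tilde {A B : H →L[ℂ] H} (hB : StrictlyPos B) (x : H) :
    rIP (opPow B (-(1/2)) * A * opPow B (-(1/2))) (opPow B (1/2) x) = rIP A x := by
  set N := opPow B (-(1/2)) with hN
  set S := opPow B (1/2) with hS
  have hNS : N * S = 1 := by
    rw [hN, hS, opPow_mul_opPow hB]; norm_num [opPow_zero hB]
  have hNSx : ∀ z : H, N (S z) = z := by
    intro z
    have := congrArg (fun (P : H →L[ℂ] H) => P z) hNS
    simpa [ContinuousLinearMap.mul_apply] using this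
  have happ : (N * A * N) (S x) = N (A x) := by
    simp [ContinuousLinearMap.mul_apply, hNSx]
  rw [rIP, happ, shift_sa (opPow_isSelfAdjoint B (-(1/2))) (A x) (S x), hNSx, rIP]

lemma rIP_persp (f : ℝ → ℝ) (A B : H →L[ℂ] H) (x : H) :
    rIP (persp f A B) x
      = rIP (cfc f (opPow B (-(1/2)) * A * opPow B (-(1/2)))) (opPow B (1/2) x) := by
  rw [persp, rIP, rIP, ContinuousLinearMap.mul_apply, ContinuousLinearMap.mul_apply,
    shift_sa (opPow_isSelfAdjoint B (1/2)) _ x]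

lemma isSelfAdjoint_algebraMap_real (r : ℝ) :
    IsSelfAdjoint (algebraMap ℝ (H →L[ℂ] H) r) := by
  rw [ContinuousLinearMap.isSelfAdjoint_iff_isSymmetric]
  intro x y
  have h1 : (algebraMap ℝ (H →L[ℂ] H) r) x = (r : ℂ) • x := by
    rw [Algebra.algebraMap_eq_smul_one]
    simp [ContinuousLinearMap.smul_apply, Complex.coe_smul]
  have h2 : (algebraMap ℝ (H →L[ℂ] H) r) y = (r : ℂ) • y := by
    rw [Algebra.algebraMap_eq_smul_one]
    simp [ContinuousLinearMap.smul_apply, Complex.coe_smul]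
  show (inner ℂ ((algebraMap ℝ (H →L[ℂ] H) r) x) y : ℂ)
      = inner ℂ x ((algebraMap ℝ (H →L[ℂ] H) r) y)
  rw [h1, h2, inner_smul_left, inner_smul_right, Complex.conj_ofReal]

end OperatorLemmas

section ULiftScalar

noncomputable instance : Inner ℂ (ULift.{u} ℂ) := ⟨fun x y => inner ℂ x.down y.down⟩

lemma ulift_inner_def (x y : ULift.{u} ℂ) : (inner ℂ x y : ℂ) = inner ℂ x.down y.down := rfl

noncomputable instance : InnerProductSpace ℂ (ULift.{u} ℂ) where
  norm_sq_eq_re_inner x := by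
    rw [ulift_inner_def]
    exact (@inner_self_eq_norm_sq ℂ ℂ _ _ _ x.down).symm
  conj_inner_symm x y := inner_conj_symm x.down y.down
  add_left x y z := by
    rw [ulift_inner_def, ulift_inner_def, ulift_inner_def]
    exact inner_add_left x.down y.down z.down
  smul_left x y r := by
    rw [ulift_inner_def, ulift_inner_def]
    exact inner_smul_left x.down y.down r

lemma strictlyPos_algebraMap {a : ℝ} (ha : 0 < a) :
    StrictlyPos (algebraMap ℝ (ULift.{u} ℂ →L[ℂ] ULift.{u} ℂ) a) := by
  constructor
  · have hsa : IsSelfAdjoint (algebraMap ℝ (ULift.{u} ℂ →L[ℂ] ULift.{u} ℂ) a) :=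
      isSelfAdjoint_algebraMap_real a
    rw [StarOrderedRing.nonneg_iff_spectrum_nonneg (R := ℝ) _ hsa]
    intro s hs
    have hsub := CFC.spectrum_algebraMap_subset (R := ℝ)
      (A := ULift.{u} ℂ →L[ℂ] ULift.{u} ℂ) a hs
    simp only [Set.mem_singleton_iff] at hsub
    subst hsub; exact ha.le
  · exact (isUnit_iff_ne_zero.mpr ha.ne').map (algebraMap ℝ (ULift.{u} ℂ →L[ℂ] ULift.{u} ℂ))

lemma scalar_from_op {r₁ r₂ : ℝ}
    (h : algebraMap ℝ (ULift.{u} ℂ →L[ℂ] ULift.{u} ℂ) r₁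
      ≤ algebraMap ℝ (ULift.{u} ℂ →L[ℂ] ULift.{u} ℂ) r₂) :
    r₁ ≤ r₂ := by
  have hx : ‖(ULift.up (1:ℂ) : ULift.{u} ℂ)‖ = 1 := by
    simp [ULift.norm_def]
  have hm := rIP_mono h (ULift.up (1:ℂ))
  rw [rIP_algebraMap, rIP_algebraMap, hx] at hm
  simpa using hm

lemma rpow_combine {s t : ℝ} (hs : 0 < s) (ht : 0 < t) :
    t ^ (1/2:ℝ) * ((t ^ (-(1/2):ℝ) * s * t ^ (-(1/2):ℝ)) ^ (1/2:ℝ)) * t ^ (1/2:ℝ)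
      = Real.sqrt (s * t) := by
  have h1 : t ^ (-(1/2):ℝ) * s * t ^ (-(1/2):ℝ) = s * t ^ (-(1:ℝ)) := by
    rw [mul_comm _ s, mul_assoc, ← Real.rpow_add ht]
    norm_num
  have h2 : (s * t ^ (-(1:ℝ))) ^ (1/2:ℝ) = s ^ (1/2:ℝ) * t ^ (-(1/2):ℝ) := by
    rw [Real.mul_rpow hs.le (Real.rpow_nonneg ht.le _), ← Real.rpow_mul ht.le]
    norm_num
  rw [h1, h2, Real.sqrt_eq_rpow, Real.mul_rpow hs.le ht.le]
  rw [show t ^ (1/2:ℝ) * (s ^ (1/2:ℝ) * t ^ (-(1/2):ℝ)) * t ^ (1/2:ℝ)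
      = s ^ (1/2:ℝ) * (t ^ (1/2:ℝ) * t ^ (-(1/2):ℝ) * t ^ (1/2:ℝ)) by ring]
  rw [← Real.rpow_add ht, ← Real.rpow_add ht]
  norm_num

lemma scalar_midpoint_logconvex {f : ℝ → ℝ} (hf : OperatorLogConvex.{u} f)
    {a c : ℝ} (ha : 0 < a) (hc : 0 < c) (hfa : 0 < f a) (hfc : 0 < f c) :
    f ((a + c) / 2) ≤ Real.sqrt (f a * f c) := by
  set M := algebraMap ℝ (ULift.{u} ℂ →L[ℂ] ULift.{u} ℂ) with hM
  have key := hf (ULift.{u} ℂ) (M a) (M c) (strictlyPos_algebraMap ha)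
    (strictlyPos_algebraMap hc)
  have hAM : arithMean (M a) (M c) = M ((a + c) / 2) := by
    have hd : ((a + c) / 2 : ℝ) = 2⁻¹ * (a + c) := by ring
    rw [arithMean, hd, hM, map_mul, map_add, Algebra.smul_def]
  have hLHS : cfc f (arithMean (M a) (M c)) = M (f ((a + c) / 2)) := by
    rw [hAM, hM, cfc_algebraMap]
  have hRHS : geomMean (cfc f (M a)) (cfc f (M c)) = M (Real.sqrt (f a * f c)) := by
    rw [hM, cfc_algebraMap, cfc_algebraMap, geomMean]
    rw [show opPow (algebraMap ℝ (ULift.{u} ℂ →L[ℂ] ULift.{u} ℂ) (f c)) (1/2)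
        = algebraMap ℝ (ULift.{u} ℂ →L[ℂ] ULift.{u} ℂ) ((f c) ^ (1/2:ℝ)) from cfc_algebraMap _ _,
      show opPow (algebraMap ℝ (ULift.{u} ℂ →L[ℂ] ULift.{u} ℂ) (f c)) (-(1/2))
        = algebraMap ℝ (ULift.{u} ℂ →L[ℂ] ULift.{u} ℂ) ((f c) ^ (-(1/2):ℝ)) from
        cfc_algebraMap _ _,
      ← map_mul, ← map_mul,
      show opPow (algebraMap ℝ (ULift.{u} ℂ →L[ℂ] ULift.{u} ℂ)
          ((f c) ^ (-(1/2):ℝ) * f a * (f c) ^ (-(1/2):ℝ))) (1/2)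
        = algebraMap ℝ (ULift.{u} ℂ →L[ℂ] ULift.{u} ℂ)
          (((f c) ^ (-(1/2):ℝ) * f a * (f c) ^ (-(1/2):ℝ)) ^ (1/2:ℝ)) from cfc_algebraMap _ _,
      ← map_mul, ← map_mul, rpow_combine hfa hfc]
  rw [hLHS, hRHS] at key
  exact scalar_from_op key

end ULiftScalar

theorem stmt_17 (f : ℝ → ℝ) (hf_cont : ContinuousOn f (Set.Ioi 0))
    (hf_pos : ∀ x : ℝ, 0 < x → 0 < f x) (hf : OperatorLogConvex f)
    {H : Type*} [NormedAddCommGroup H] [InnerProductSpace ℂ H] [CompleteSpace H]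
    (A B C : H →L[ℂ] H) (hA : StrictlyPos A) (hB : StrictlyPos B) (hC : StrictlyPos C)
    (x : H) (hx : ‖x‖ = 1) :
    rIP B x * f (rIP (arithMean A C) x / rIP B x) ≤
      Real.sqrt (rIP (persp f A B) x * rIP (persp f C B) x) := by
  -- basic positivity facts
  have hx0 : x ≠ 0 := by
    intro h; rw [h] at hx; simp at hx
  have hb : 0 < rIP B x := rIP_pos hB hx0
  have ha' : 0 < rIP A x := rIP_pos hA hx0
  have hc' : 0 < rIP C x := rIP_pos hC hx0
  set b := rIP B x with hbdef
  set a' := rIP A x with ha'def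
  set c' := rIP C x with hc'def
  -- midpoint convexity of f on (0, ∞)
  have hmly : ∀ p ∈ Set.Ioi (0:ℝ), ∀ q ∈ Set.Ioi (0:ℝ),
      f ((p + q) / 2) ≤ (f p + f q) / 2 := by
    intro p hp q hq
    have hp' : (0:ℝ) < p := hp
    have hq' : (0:ℝ) < q := hq
    have hfp := hf_pos _ hp'
    have hfq := hf_pos _ hq'
    have h1 := scalar_midpoint_logconvex hf hp' hq' hfp hfq
    have h2 : Real.sqrt (f p * f q) ≤ (f p + f q) / 2 := by
      have hsq : f p * f q ≤ ((f p + f q) / 2) ^ 2 := by nlinarith [sq_nonneg (f p - f q)]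
      have := Real.sqrt_le_sqrt hsq
      rwa [Real.sqrt_sq (by linarith : (0:ℝ) ≤ (f p + f q) / 2)] at this
    linarith
  have hconv : ConvexOn ℝ (Set.Ioi 0) f := convexOn_of_midpoint hf_cont hmly
  -- Jensen step for A and C
  set y := opPow B (1/2) x with hydef
  have hy0 : y ≠ 0 := isUnit_apply_ne_zero (opPow_isUnit hB _) hx0
  have hnorm : ‖y‖ ^ 2 = b := norm_shalf_sq hB x
  have hJA : b * f (a' / b) ≤ rIP (persp f A B) x := by
    have hJ := jensen_cfc hf_cont hconv (tilde_strictlyPos hA hB) hy0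
    rw [hnorm, rIP_tilde hB x, ← ha'def] at hJ
    rw [rIP_persp, ← hydef]
    exact hJ
  have hJC : b * f (c' / b) ≤ rIP (persp f C B) x := by
    have hJ := jensen_cfc hf_cont hconv (tilde_strictlyPos hC hB) hy0
    rw [hnorm, rIP_tilde hB x, ← hc'def] at hJ
    rw [rIP_persp, ← hydef]
    exact hJ
  -- scalar log-convexity step
  have hfa' : 0 < f (a' / b) := hf_pos _ (div_pos ha' hb)
  have hfc' : 0 < f (c' / b) := hf_pos _ (div_pos hc' hb)
  have hmval : rIP (arithMean A C) x = (a' + c') / 2 := by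
    rw [arithMean, rIP_smul, rIP_add, ← ha'def, ← hc'def]
    ring
  have hdiv : rIP (arithMean A C) x / b = (a' / b + c' / b) / 2 := by
    rw [hmval, ← add_div, div_div, div_div, mul_comm]
  have hstep1 : f (rIP (arithMean A C) x / b)
      ≤ Real.sqrt (f (a' / b) * f (c' / b)) := by
    rw [hdiv]
    exact scalar_midpoint_logconvex hf (div_pos ha' hb) (div_pos hc' hb) hfa' hfc'
  have hstep2 : b * Real.sqrt (f (a' / b) * f (c' / b))
      = Real.sqrt ((b * f (a' / b)) * (b * f (c' / b))) := by
    rw [show (b * f (a' / b)) * (b * f (c' / b)) = b ^ 2 * (f (a' / b) * f (c' / b)) by ring,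
      Real.sqrt_mul (sq_nonneg b), Real.sqrt_sq hb.le]
  have hstep3 : Real.sqrt ((b * f (a' / b)) * (b * f (c' / b)))
      ≤ Real.sqrt (rIP (persp f A B) x * rIP (persp f C B) x) := by
    apply Real.sqrt_le_sqrt
    exact mul_le_mul hJA hJC (mul_pos hb hfc').le (le_trans (mul_pos hb hfa').le hJA)
  calc b * f (rIP (arithMean A C) x / b)
      ≤ b * Real.sqrt (f (a' / b) * f (c' / b)) := by
        exact mul_le_mul_of_nonneg_left hstep1 hb.le
    _ = Real.sqrt ((b * f (a' / b)) * (b * f (c' / b))) := hstep2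
    _ ≤ Real.sqrt (rIP (persp f A B) x * rIP (persp f C B) x) := hstep3
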